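/- For each n ∈ ℕ let G_n be the graph with vertex set {0,1,…,n} × {0,1,…,n} and the following edges: (p,q−1)(p,q) for all 0 ≤ p ≤ n and 1 ≤ q ≤ n; (p−1,0)(p,0) and (p−1,n)(p,n) for all 1 ≤ p ≤ n; and, for 1 ≤ q ≤ n−1, the edge (p−1,q)(p,q) is present iff (p odd and q ≡ 0 mod 4) or (p even and q ≡ 2 mod 4). Let G be the graph obtained from the graph ℕ (with n adjacent to n+1) by attaching, for each n, the vertex (0,0) of G_n to the vertex n of ℕ, with every edge of G of length 1. Then G is not ε-densely k-path-chordal for any ε > 0 and any k > 10: for n ≥ max{k, 2ε}, on the geodesic-square cycle in G_n with corner vertices (0,0), (n,0), (n,n), (0,n), no vertex of the form (0,q), 0 ≤ q ≤ n, is a shortcut vertex. -/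

import Mathlib

open SimpleGraph

namespace Chordality

variable {V : Type*} {G : SimpleGraph V}

/-- The length of a walk in a graph whose edge `e` has length `ℓ e`. -/
noncomputable def wlen (ℓ : Sym2 V → ℝ) {u v : V} (w : G.Walk u v) : ℝ :=
  (w.edges.map ℓ).sum

/-- The path metric of a metric graph: the infimum of the lengths of walks joining
two vertices. -/
noncomputable def gdist (G : SimpleGraph V) (ℓ : Sym2 V → ℝ) (u v : V) : ℝ :=
  sInf {x : ℝ | ∃ w : G.Walk u v, wlen ℓ w = x}

/-- A walk is geodesic if its length realizes the path metric between its endpoints. -/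
def IsGeodesicWalk (ℓ : Sym2 V → ℝ) {u v : V} (w : G.Walk u v) : Prop :=
  wlen ℓ w = gdist G ℓ u v

/-- `G`, with edge lengths `ℓ`, is a metric graph: connected, locally finite,
with positive edge lengths. -/
def IsMetricGraph (G : SimpleGraph V) (ℓ : Sym2 V → ℝ) : Prop :=
  G.Connected ∧ (∀ e ∈ G.edgeSet, 0 < ℓ e) ∧ ∀ v : V, (G.neighborSet v).Finite

/-- A walk lies inside the closed walk `c`. -/
def WalkIn {z u v : V} (c : G.Walk z z) (w : G.Walk u v) : Prop :=
  (∀ e ∈ w.edges, e ∈ c.edges) ∧ ∀ a ∈ w.support, a ∈ c.support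

/-- The length metric `d_C` of a cycle `c`, evaluated on vertices of `c`:
the infimum of lengths of walks joining `u` and `v` inside `c`. -/
noncomputable def cdist (ℓ : Sym2 V → ℝ) {z : V} (c : G.Walk z z) (u v : V) : ℝ :=
  sInf {x : ℝ | ∃ w : G.Walk u v, WalkIn c w ∧ wlen ℓ w = x}

/-- `σ` is a shortcut of the cycle `c`: a path joining two vertices `p, q` of `c`
with `L(σ) < d_C(p, q)`. -/
def IsShortcut (ℓ : Sym2 V → ℝ) {z p q : V} (c : G.Walk z z) (σ : G.Walk p q) : Prop :=
  σ.IsPath ∧ p ∈ c.support ∧ q ∈ c.support ∧ wlen ℓ σ < cdist ℓ c p q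

/-- `σ` is a strict shortcut of `c`: a shortcut meeting `c` only at its endpoints. -/
def IsStrictShortcut (ℓ : Sym2 V → ℝ) {z p q : V} (c : G.Walk z z) (σ : G.Walk p q) : Prop :=
  IsShortcut ℓ c σ ∧ ∀ a ∈ σ.support, a ∈ c.support → a = p ∨ a = q

/-- `v` is a shortcut vertex of `c`, i.e. an endpoint of some strict shortcut of `c`. -/
def ShortcutVertex (ℓ : Sym2 V → ℝ) {z : V} (c : G.Walk z z) (v : V) : Prop :=
  ∃ (p q : V) (σ : G.Walk p q), IsStrictShortcut ℓ c σ ∧ (v = p ∨ v = q)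

/-- `v` is a shortcut vertex of `c` associated to a strict shortcut of length at most `m`. -/
def ShortcutVertexLe (ℓ : Sym2 V → ℝ) {z : V} (c : G.Walk z z) (m : ℝ) (v : V) : Prop :=
  ∃ (p q : V) (σ : G.Walk p q),
    IsStrictShortcut ℓ c σ ∧ wlen ℓ σ ≤ m ∧ (v = p ∨ v = q)

/-- `(k,m)`-edge-chordal: every cycle of length at least `k` has a shortcut consisting of
a single edge of length at most `m`. -/
def EdgeChordal (G : SimpleGraph V) (ℓ : Sym2 V → ℝ) (k m : ℝ) : Prop :=
  ∀ (z : V) (c : G.Walk z z), c.IsCycle → k ≤ wlen ℓ c →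
    ∃ (p q : V) (h : G.Adj p q),
      IsShortcut ℓ c (Walk.cons h Walk.nil) ∧ ℓ s(p, q) ≤ m

/-- `k`-path-chordal: every cycle of length at least `k` admits a shortcut. -/
def PathChordal (G : SimpleGraph V) (ℓ : Sym2 V → ℝ) (k : ℝ) : Prop :=
  ∀ (z : V) (c : G.Walk z z), c.IsCycle → k ≤ wlen ℓ c →
    ∃ (p q : V) (σ : G.Walk p q), IsShortcut ℓ c σ

/-- `(k,m)`-path-chordal: every cycle of length at least `k` admits a shortcut of length
at most `m`. -/
def PathChordalLe (G : SimpleGraph V) (ℓ : Sym2 V → ℝ) (k m : ℝ) : Prop :=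
  ∀ (z : V) (c : G.Walk z z), c.IsCycle → k ≤ wlen ℓ c →
    ∃ (p q : V) (σ : G.Walk p q), IsShortcut ℓ c σ ∧ wlen ℓ σ ≤ m

/-- `ε`-densely `(k,m)`-path-chordal: on every cycle of length at least `k`, the vertices
that are shortcut vertices of strict shortcuts of length at most `m` form an `ε`-dense
subset of `(C, d_C)`. -/
def DenselyPathChordal (G : SimpleGraph V) (ℓ : Sym2 V → ℝ) (ε k m : ℝ) : Prop :=
  ∀ (z : V) (c : G.Walk z z), c.IsCycle → k ≤ wlen ℓ c →
    ∀ x ∈ c.support, ∃ v, ShortcutVertexLe ℓ c m v ∧ cdist ℓ c v x < ε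

/-- `ε`-densely `k`-path-chordal: on every cycle of length at least `k`, the shortcut
vertices (of strict shortcuts, with no bound on their lengths) form an `ε`-dense subset
of `(C, d_C)`. -/
def DenselyKPathChordal (G : SimpleGraph V) (ℓ : Sym2 V → ℝ) (ε k : ℝ) : Prop :=
  ∀ (z : V) (c : G.Walk z z), c.IsCycle → k ≤ wlen ℓ c →
    ∀ x ∈ c.support, ∃ v, ShortcutVertex ℓ c v ∧ cdist ℓ c v x < ε

/-- The geodesic triangle with sides `g1, g2, g3` is `δ`-thin: each side is contained in
the `δ`-neighborhood of the union of the other two sides. -/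
def ThinTriangle (ℓ : Sym2 V → ℝ) (δ : ℝ) {x y z : V}
    (g1 : G.Walk x y) (g2 : G.Walk y z) (g3 : G.Walk z x) : Prop :=
  (∀ p ∈ g1.support, ∃ q, (q ∈ g2.support ∨ q ∈ g3.support) ∧ gdist G ℓ p q ≤ δ) ∧
  (∀ p ∈ g2.support, ∃ q, (q ∈ g3.support ∨ q ∈ g1.support) ∧ gdist G ℓ p q ≤ δ) ∧
  (∀ p ∈ g3.support, ∃ q, (q ∈ g1.support ∨ q ∈ g2.support) ∧ gdist G ℓ p q ≤ δ)

/-- `G` is `δ`-hyperbolic: every geodesic triangle is `δ`-thin. -/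
def Hyperbolic (G : SimpleGraph V) (ℓ : Sym2 V → ℝ) (δ : ℝ) : Prop :=
  ∀ (x y z : V) (g1 : G.Walk x y) (g2 : G.Walk y z) (g3 : G.Walk z x),
    IsGeodesicWalk ℓ g1 → IsGeodesicWalk ℓ g2 → IsGeodesicWalk ℓ g3 →
    ThinTriangle ℓ δ g1 g2 g3

/-- The sharp hyperbolicity constant `δ(G)`. -/
noncomputable def hypConst (G : SimpleGraph V) (ℓ : Sym2 V → ℝ) : ℝ :=
  sInf {δ : ℝ | 0 ≤ δ ∧ Hyperbolic G ℓ δ}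

/-- A walk lies inside the geodesic triangle with sides `g1, g2, g3`. -/
def WalkInTri {x y z u v : V} (g1 : G.Walk x y) (g2 : G.Walk y z) (g3 : G.Walk z x)
    (w : G.Walk u v) : Prop :=
  (∀ e ∈ w.edges, e ∈ g1.edges ∨ e ∈ g2.edges ∨ e ∈ g3.edges) ∧
  ∀ a ∈ w.support, a ∈ g1.support ∨ a ∈ g2.support ∨ a ∈ g3.support

/-- The length metric `d_T` of the geodesic triangle with sides `g1, g2, g3`,
evaluated on vertices of the triangle. -/
noncomputable def tdist (ℓ : Sym2 V → ℝ) {x y z : V} (g1 : G.Walk x y) (g2 : G.Walk y z)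
    (g3 : G.Walk z x) (u v : V) : ℝ :=
  sInf {r : ℝ | ∃ w : G.Walk u v, WalkInTri g1 g2 g3 w ∧ wlen ℓ w = r}

/-- `σ` is a shortcut of the geodesic triangle with sides `g1, g2, g3`: a path joining
two vertices `p, q` of the triangle with `L(σ) < d_T(p, q)`. -/
def IsTriShortcut (ℓ : Sym2 V → ℝ) {x y z p q : V} (g1 : G.Walk x y) (g2 : G.Walk y z)
    (g3 : G.Walk z x) (σ : G.Walk p q) : Prop :=
  σ.IsPath ∧ (p ∈ g1.support ∨ p ∈ g2.support ∨ p ∈ g3.support) ∧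
    (q ∈ g1.support ∨ q ∈ g2.support ∨ q ∈ g3.support) ∧
    wlen ℓ σ < tdist ℓ g1 g2 g3 p q

/-- `v` is a shortcut vertex of the triangle, associated to a shortcut of length
at most `m`. -/
def TriShortcutVertexLe (ℓ : Sym2 V → ℝ) {x y z : V} (g1 : G.Walk x y) (g2 : G.Walk y z)
    (g3 : G.Walk z x) (m : ℝ) (v : V) : Prop :=
  ∃ (p q : V) (σ : G.Walk p q),
    IsTriShortcut ℓ g1 g2 g3 σ ∧ wlen ℓ σ ≤ m ∧ (v = p ∨ v = q)

/-- `ε`-densely `(k,m)`-path-chordal on the triangles: for every geodesic triangle of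
total length at least `k`, the shortcut vertices of shortcuts of length at most `m`
form an `ε`-dense subset of `(T, d_T)`. -/
def DenselyPathChordalOnTriangles (G : SimpleGraph V) (ℓ : Sym2 V → ℝ) (ε k m : ℝ) : Prop :=
  ∀ (x y z : V) (g1 : G.Walk x y) (g2 : G.Walk y z) (g3 : G.Walk z x),
    IsGeodesicWalk ℓ g1 → IsGeodesicWalk ℓ g2 → IsGeodesicWalk ℓ g3 →
    k ≤ wlen ℓ g1 + wlen ℓ g2 + wlen ℓ g3 →
    ∀ p, (p ∈ g1.support ∨ p ∈ g2.support ∨ p ∈ g3.support) →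
      ∃ v, TriShortcutVertexLe ℓ g1 g2 g3 m v ∧ tdist ℓ g1 g2 g3 v p < ε

end Chordality

namespace Chordality

/-- The horizontal edge between `(p-1, q)` and `(p, q)` is present in `G_n` iff `q = 0`,
or `q = n`, or `1 ≤ q ≤ n - 1` and (`p` is odd and `q ≡ 0 (mod 4)`, or `p` is even and
`q ≡ 2 (mod 4)`). -/
def horizOK4 (n p q : ℕ) : Prop :=
  q = 0 ∨ q = n ∨
    (1 ≤ q ∧ q ≤ n - 1 ∧ ((Odd p ∧ q % 4 = 0) ∨ (Even p ∧ q % 4 = 2)))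

/-- The adjacency relation of the graph `G_n` on `{0, …, n} × {0, …, n}`: all vertical
edges `(p, q)(p, q+1)`, and the horizontal edges `(p, q)(p+1, q)` allowed by
`horizOK4`. -/
def gnAdj4 (n : ℕ) (a b : ℕ × ℕ) : Prop :=
  a.1 ≤ n ∧ b.1 ≤ n ∧ a.2 ≤ n ∧ b.2 ≤ n ∧
    ((a.1 = b.1 ∧ b.2 = a.2 + 1) ∨ (a.2 = b.2 ∧ b.1 = a.1 + 1 ∧ horizOK4 n b.1 a.2))

/-- The graph `G` obtained from the graph `ℕ` by attaching, for each `n`, the vertex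
`(0,0)` of `G_n` to the vertex `n` of `ℕ`; the vertex `(n, p, q)` is the vertex `(p, q)`
of the copy `G_n`, and `(n, 0, 0)` is the `n`-th vertex of the spine `ℕ`. -/
def bigG4 : SimpleGraph (ℕ × ℕ × ℕ) :=
  SimpleGraph.fromRel fun a b =>
    (a.2 = ((0 : ℕ), (0 : ℕ)) ∧ b.2 = ((0 : ℕ), (0 : ℕ)) ∧ b.1 = a.1 + 1) ∨
    (a.1 = b.1 ∧ gnAdj4 a.1 a.2 b.2)

end Chordality


namespace Chordality

section Generic

open SimpleGraph Walk

variable {V : Type*} {G : SimpleGraph V}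

/-- Walk built from a function on an initial segment of `ℕ`. -/
def wof (G : SimpleGraph V) (f : ℕ → V) :
    (m : ℕ) → (∀ i, i < m → G.Adj (f i) (f (i+1))) → G.Walk (f 0) (f m)
  | 0, _ => Walk.nil
  | (m+1), h => (wof G f m (fun i hi => h i (Nat.lt_succ_of_lt hi))).concat (h m (Nat.lt_succ_self m))

lemma wof_support (f : ℕ → V) : ∀ (m : ℕ) (h : ∀ i, i < m → G.Adj (f i) (f (i+1))),
    (wof G f m h).support = (List.range (m+1)).map f
  | 0, h => by simp [wof, List.range_succ]
  | (m+1), h => by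
      rw [wof, Walk.support_concat, wof_support f m]
      simp [List.range_succ]

lemma wof_edges (f : ℕ → V) : ∀ (m : ℕ) (h : ∀ i, i < m → G.Adj (f i) (f (i+1))),
    (wof G f m h).edges = (List.range m).map (fun i => s(f i, f (i+1)))
  | 0, h => by simp [wof]
  | (m+1), h => by
      rw [wof, Walk.edges_concat, wof_edges f m, List.range_succ]
      simp

lemma wof_length (f : ℕ → V) : ∀ (m : ℕ) (h : ∀ i, i < m → G.Adj (f i) (f (i+1))),
    (wof G f m h).length = m
  | 0, _ => rfl
  | (m+1), h => by rw [wof, Walk.length_concat, wof_length f m]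

lemma wlen_one {u v : V} (w : G.Walk u v) : wlen (fun _ => (1:ℝ)) w = w.length := by
  unfold wlen
  induction w with
  | nil => simp
  | cons h w ih => rw [Walk.edges_cons, List.map_cons, List.sum_cons, ih, Walk.length_cons]; push_cast; ring

lemma wlen_one_nonneg {u v : V} (w : G.Walk u v) : 0 ≤ wlen (fun _ => (1:ℝ)) w := by
  rw [wlen_one]; positivity

lemma cdist_le_walkIn {z u v : V} {c : G.Walk z z} (w : G.Walk u v) (hw : WalkIn c w) :
    cdist (fun _ => (1:ℝ)) c u v ≤ w.length := by
  have h1 : (w.length : ℝ) = wlen (fun _ => (1:ℝ)) w := (wlen_one w).symm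
  rw [h1]
  refine csInf_le ⟨0, ?_⟩ ⟨w, hw, rfl⟩
  rintro x ⟨w', _, rfl⟩
  exact wlen_one_nonneg w'

lemma le_cdist_walkIn {z u v : V} {c : G.Walk z z} (B : ℝ)
    (w0 : G.Walk u v) (hw0 : WalkIn c w0)
    (h : ∀ w : G.Walk u v, WalkIn c w → B ≤ (w.length : ℝ)) :
    B ≤ cdist (fun _ => (1:ℝ)) c u v := by
  refine le_csInf ⟨_, w0, hw0, rfl⟩ ?_
  rintro x ⟨w, hw, rfl⟩
  rw [wlen_one]; exact h w hw

lemma walkIn_reverse {z u v : V} {c : G.Walk z z} {w : G.Walk u v} (h : WalkIn c w) :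
    WalkIn c w.reverse := by
  obtain ⟨he, hs⟩ := h
  constructor
  · intro e hee; rw [Walk.edges_reverse, List.mem_reverse] at hee; exact he e hee
  · intro a haa; rw [Walk.support_reverse, List.mem_reverse] at haa; exact hs a haa

lemma walkIn_append {z u v x : V} {c : G.Walk z z} {w1 : G.Walk u v} {w2 : G.Walk v x}
    (h1 : WalkIn c w1) (h2 : WalkIn c w2) : WalkIn c (w1.append w2) := by
  constructor
  · intro e he; rw [Walk.edges_append, List.mem_append] at he
    rcases he with he | he
    exacts [h1.1 e he, h2.1 e he]
  · intro a ha; rw [Walk.mem_support_append_iff] at ha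
    rcases ha with ha | ha
    exacts [h1.2 a ha, h2.2 a ha]

lemma walkIn_copy {z u v u' v' : V} {c : G.Walk z z} {w : G.Walk u v} (h : WalkIn c w)
    (hu : u = u') (hv : v = v') : WalkIn c (w.copy hu hv) := by
  obtain ⟨he, hs⟩ := h
  exact ⟨by simpa using he, by simpa using hs⟩

lemma wlen_reverse (ℓ : Sym2 V → ℝ) {u v : V} (w : G.Walk u v) :
    wlen ℓ w.reverse = wlen ℓ w := by
  unfold wlen; rw [Walk.edges_reverse, List.map_reverse, List.sum_reverse]

lemma cdist_comm (ℓ : Sym2 V → ℝ) {z : V} (c : G.Walk z z) (u v : V) :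
    cdist ℓ c u v = cdist ℓ c v u := by
  unfold cdist; congr 1; ext x
  constructor <;> rintro ⟨w, hw, rfl⟩ <;>
    exact ⟨w.reverse, walkIn_reverse hw, wlen_reverse ℓ w⟩

lemma IsStrictShortcut.rev {ℓ : Sym2 V → ℝ} {z p q : V} {c : G.Walk z z} {σ : G.Walk p q}
    (h : IsStrictShortcut ℓ c σ) : IsStrictShortcut ℓ c σ.reverse := by
  obtain ⟨⟨h1, h2, h3, h4⟩, h5⟩ := h
  refine ⟨⟨h1.reverse, h3, h2, ?_⟩, ?_⟩
  · rw [wlen_reverse, cdist_comm]; exact h4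
  · intro a ha hc
    rw [Walk.support_reverse, List.mem_reverse] at ha
    exact (h5 a ha hc).symm

lemma walk_lip (φ : V → ℤ) (P : V → Prop)
    (hedge : ∀ a b, G.Adj a b → P a → P b → |φ a - φ b| ≤ 1)
    {u v : V} (w : G.Walk u v) (hP : ∀ x ∈ w.support, P x) :
    |φ u - φ v| ≤ (w.length : ℤ) := by
  induction w with
  | nil => simp
  | @cons a b c h w ih =>
      have hab : |φ a - φ b| ≤ 1 := hedge a b h (hP a (by simp)) (hP b (by simp))
      have hbc := ih (fun x hx => hP x (by simp [Walk.support_cons, hx]))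
      have tri : |φ a - φ c| ≤ |φ a - φ b| + |φ b - φ c| := abs_sub_le _ _ _
      rw [Walk.length_cons]
      push_cast
      linarith

end Generic

end Chordality


namespace Chordality

section Grid

open SimpleGraph Walk

lemma bigG4_adj_grid {n : ℕ} {a b : ℕ × ℕ} (h : gnAdj4 n a b) : bigG4.Adj (n, a) (n, b) := by
  rw [bigG4, fromRel_adj]
  refine ⟨?_, Or.inl (Or.inr ⟨rfl, h⟩)⟩
  obtain ⟨-, -, -, -, h5⟩ := h
  intro he
  rw [Prod.mk.injEq] at he
  obtain ⟨-, rfl⟩ := he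
  rcases h5 with ⟨-, h2⟩ | ⟨-, h2, -⟩ <;> omega

lemma adj_step {n : ℕ} {u v : ℕ × ℕ × ℕ} (h : bigG4.Adj u v) (hu : u.1 = n) (hv : v.1 = n) :
    gnAdj4 n u.2 v.2 ∨ gnAdj4 n v.2 u.2 := by
  rw [bigG4, fromRel_adj] at h
  obtain ⟨-, h | h⟩ := h
  · rcases h with ⟨-, -, h1⟩ | ⟨-, h2⟩
    · omega
    · left; rwa [hu] at h2
  · rcases h with ⟨-, -, h1⟩ | ⟨-, h2⟩
    · omega
    · right; rwa [hv] at h2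

lemma step_form {n : ℕ} {a b : ℕ × ℕ} (h : gnAdj4 n a b ∨ gnAdj4 n b a) :
    a.1 ≤ n ∧ a.2 ≤ n ∧ b.1 ≤ n ∧ b.2 ≤ n ∧
      ((a.1 = b.1 ∧ (b.2 = a.2 + 1 ∨ a.2 = b.2 + 1)) ∨
       (a.2 = b.2 ∧ ((b.1 = a.1 + 1 ∧ horizOK4 n b.1 a.2) ∨ (a.1 = b.1 + 1 ∧ horizOK4 n a.1 a.2)))) := by
  rcases h with ⟨h1, h2, h3, h4, h5⟩ | ⟨h1, h2, h3, h4, h5⟩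
  · refine ⟨h1, h3, h2, h4, ?_⟩
    rcases h5 with ⟨e1, e2⟩ | ⟨e1, e2, e3⟩
    · exact Or.inl ⟨e1, Or.inl e2⟩
    · exact Or.inr ⟨e1, Or.inl ⟨e2, e3⟩⟩
  · refine ⟨h2, h4, h1, h3, ?_⟩
    rcases h5 with ⟨e1, e2⟩ | ⟨e1, e2, e3⟩
    · exact Or.inl ⟨e1.symm, Or.inr e2⟩
    · exact Or.inr ⟨e1.symm, Or.inr ⟨e2, e1 ▸ e3⟩⟩

/-- Parametrization of the perimeter of the `n × n` grid. -/
def per (n i : ℕ) : ℕ × ℕ :=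
  if i ≤ n then (i, 0)
  else if i ≤ 2*n then (n, i - n)
  else if i ≤ 3*n then (3*n - i, n)
  else (0, 4*n - i)

lemma per1 {n i : ℕ} (h : i ≤ n) : per n i = (i, 0) := by
  unfold per; split_ifs <;> simp only [Prod.mk.injEq] <;> omega

lemma per2 {n i : ℕ} (h1 : n ≤ i) (h2 : i ≤ 2*n) : per n i = (n, i - n) := by
  unfold per; split_ifs <;> simp only [Prod.mk.injEq] <;> omega

lemma per3 {n i : ℕ} (h1 : 2*n ≤ i) (h2 : i ≤ 3*n) : per n i = (3*n - i, n) := by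
  unfold per; split_ifs <;> simp only [Prod.mk.injEq] <;> omega

lemma per4 {n i : ℕ} (h1 : 3*n ≤ i) (h2 : i ≤ 4*n) : per n i = (0, 4*n - i) := by
  unfold per; split_ifs <;> simp only [Prod.mk.injEq] <;> omega

/-- Inverse of the perimeter parametrization. -/
def pos (n : ℕ) (v : ℕ × ℕ) : ℕ :=
  if v.2 = 0 then v.1 else if v.1 = n then n + v.2 else if v.2 = n then 3*n - v.1 else 4*n - v.2

lemma pos_per {n i : ℕ} (hn : 1 ≤ n) (h : i < 4*n) : pos n (per n i) = i := by
  rcases Nat.lt_or_ge i (n+1) with h1 | h1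
  · rw [per1 (by omega)]; simp [pos]
  rcases Nat.lt_or_ge i (2*n+1) with h2 | h2
  · rw [per2 (by omega) (by omega)]
    simp [pos, show ¬(i - n = 0) from by omega]
    omega
  rcases Nat.lt_or_ge i (3*n+1) with h3 | h3
  · rw [per3 (by omega) (by omega)]
    simp [pos, show ¬(n = 0) from by omega, show ¬(3*n - i = n) from by omega]
    omega
  · rw [per4 (by omega) (by omega)]
    simp [pos, show ¬(4*n - i = 0) from by omega, show ¬((0:ℕ) = n) from by omega,
      show ¬(4*n - i = n) from by omega]
    omega

/-- The perimeter vertices of the grid `G_n` inside `bigG4`. -/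
def fp (n i : ℕ) : ℕ × ℕ × ℕ := (n, per n i)

lemma fp_inj {n : ℕ} (hn : 1 ≤ n) {i j : ℕ} (hi : i < 4*n) (hj : j < 4*n)
    (h : fp n i = fp n j) : i = j := by
  have h2 : per n i = per n j := by
    rw [fp, fp, Prod.mk.injEq] at h; exact h.2
  rw [← pos_per hn hi, ← pos_per hn hj, h2]

lemma fp_last {n : ℕ} (hn : 1 ≤ n) : fp n (4*n) = fp n 0 := by
  rw [fp, fp, per1 (Nat.zero_le n), per4 (n := n) (i := 4*n) (by omega) (le_refl _)]
  simp [Prod.mk.injEq] <;> omega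

lemma hAdj {n : ℕ} (hn : 1 ≤ n) {i : ℕ} (h : i < 4*n) : bigG4.Adj (fp n i) (fp n (i+1)) := by
  rcases Nat.lt_or_ge i n with h1 | h1
  · rw [fp, fp, per1 (n := n) (i := i) (by omega), per1 (n := n) (i := i+1) (by omega)]
    exact bigG4_adj_grid ⟨by omega, by omega, by omega, by omega, Or.inr ⟨rfl, rfl, Or.inl rfl⟩⟩
  rcases Nat.lt_or_ge i (2*n) with h2 | h2
  · rw [fp, fp, per2 (n := n) (i := i) (by omega) (by omega),
      per2 (n := n) (i := i+1) (by omega) (by omega)]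
    exact bigG4_adj_grid ⟨le_rfl, le_rfl, by omega, by omega, Or.inl ⟨rfl, by omega⟩⟩
  rcases Nat.lt_or_ge i (3*n) with h3 | h3
  · rw [fp, fp, per3 (n := n) (i := i) (by omega) (by omega),
      per3 (n := n) (i := i+1) (by omega) (by omega)]
    exact (bigG4_adj_grid (a := (3*n - (i+1), n)) (b := (3*n - i, n))
      ⟨by omega, by omega, le_rfl, le_rfl,
      Or.inr ⟨rfl, by omega, Or.inr (Or.inl rfl)⟩⟩).symm
  · rw [fp, fp, per4 (n := n) (i := i) (by omega) (by omega),
      per4 (n := n) (i := i+1) (by omega) (by omega)]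
    exact (bigG4_adj_grid (a := (0, 4*n - (i+1))) (b := (0, 4*n - i))
      ⟨by omega, by omega, by omega, by omega, Or.inl ⟨rfl, by omega⟩⟩).symm

/-- The boundary cycle of the grid `G_n`. -/
def cW (n : ℕ) (hn : 1 ≤ n) : bigG4.Walk (n, 0, 0) (n, 0, 0) :=
  (wof bigG4 (fp n) (4*n) (fun _ hi => hAdj hn hi)).copy
    (by rw [fp, per1 (Nat.zero_le n)]) (by rw [fp_last hn, fp, per1 (Nat.zero_le n)])

lemma support_cW {n : ℕ} (hn : 1 ≤ n) :
    (cW n hn).support = (List.range (4*n+1)).map (fp n) := by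
  rw [cW, Walk.support_copy, wof_support]

lemma edges_cW {n : ℕ} (hn : 1 ≤ n) :
    (cW n hn).edges = (List.range (4*n)).map (fun i => s(fp n i, fp n (i+1))) := by
  rw [cW, Walk.edges_copy, wof_edges]

lemma length_cW {n : ℕ} (hn : 1 ≤ n) : (cW n hn).length = 4*n := by
  rw [cW, Walk.length_copy, wof_length]

lemma fp_bottom {n x : ℕ} (h : x ≤ n) : fp n x = (n, x, 0) := by rw [fp, per1 h]

lemma fp_right {n y : ℕ} (h : y ≤ n) : fp n (n + y) = (n, n, y) := by
  rw [fp, per2 (n := n) (i := n + y) (by omega) (by omega)]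
  simp [Prod.mk.injEq] <;> omega

lemma fp_top {n x : ℕ} (h : x ≤ n) : fp n (3*n - x) = (n, x, n) := by
  rw [fp, per3 (n := n) (i := 3*n - x) (by omega) (by omega)]
  simp [Prod.mk.injEq] <;> omega

lemma fp_left {n y : ℕ} (h : y ≤ n) : fp n (4*n - y) = (n, 0, y) := by
  rw [fp, per4 (n := n) (i := 4*n - y) (by omega) (by omega)]
  simp [Prod.mk.injEq] <;> omega

lemma mem_cW_iff {n : ℕ} (hn : 1 ≤ n) {v : ℕ × ℕ × ℕ} :
    v ∈ (cW n hn).support ↔ v.1 = n ∧ v.2.1 ≤ n ∧ v.2.2 ≤ n ∧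
      (v.2.1 = 0 ∨ v.2.1 = n ∨ v.2.2 = 0 ∨ v.2.2 = n) := by
  rw [support_cW hn]
  simp only [List.mem_map, List.mem_range]
  constructor
  · rintro ⟨i, hi, rfl⟩
    rcases Nat.lt_or_ge i (n+1) with h1 | h1
    · rw [fp, per1 (n := n) (i := i) (by omega)]; simp; omega
    rcases Nat.lt_or_ge i (2*n+1) with h2 | h2
    · rw [fp, per2 (n := n) (i := i) (by omega) (by omega)]; simp; omega
    rcases Nat.lt_or_ge i (3*n+1) with h3 | h3
    · rw [fp, per3 (n := n) (i := i) (by omega) (by omega)]; simp; omega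
    · rw [fp, per4 (n := n) (i := i) (by omega) (by omega)]; simp; omega
  · rintro ⟨h1, h2, h3, h4⟩
    obtain ⟨v1, x, y⟩ := v
    dsimp only at h1 h2 h3 h4
    rw [h1]
    by_cases hy0 : y = 0
    · rw [hy0]; exact ⟨x, by omega, fp_bottom h2⟩
    by_cases hx : x = n
    · rw [hx]; exact ⟨n + y, by omega, fp_right h3⟩
    by_cases hyn : y = n
    · rw [hyn]; exact ⟨3*n - x, by omega, fp_top h2⟩
    · have hx0 : x = 0 := by tauto
      rw [hx0]; exact ⟨4*n - y, by omega, fp_left h3⟩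

lemma isCycle_cW {n : ℕ} (hn : 1 ≤ n) : (cW n hn).IsCycle := by
  have hinj : ∀ i < 4*n, ∀ j < 4*n, fp n i = fp n j → i = j :=
    fun i hi j hj h => fp_inj hn hi hj h
  refine ⟨⟨⟨?_⟩, ?_⟩, ?_⟩
  · rw [edges_cW hn]
    refine List.Nodup.map_on ?_ List.nodup_range
    intro i hi j hj hij
    rw [List.mem_range] at hi hj
    rw [Sym2.eq_iff] at hij
    rcases hij with ⟨e1, e2⟩ | ⟨e1, e2⟩
    · exact hinj i hi j hj e1
    · exfalso
      rcases Nat.lt_or_ge (j+1) (4*n) with hj1 | hj1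
      · have e1' : i = j + 1 := hinj i hi (j+1) hj1 e1
        rcases Nat.lt_or_ge (i+1) (4*n) with hi1 | hi1
        · have e2' : i + 1 = j := hinj (i+1) hi1 j hj e2
          omega
        · have h4 : i + 1 = 4*n := by omega
          have hj0 : fp n j = fp n 0 := by rw [← e2, h4, fp_last hn]
          have := hinj j hj 0 (by omega) hj0
          omega
      · have h4 : j + 1 = 4*n := by omega
        have hi0 : fp n i = fp n 0 := by rw [e1, h4, fp_last hn]
        have e1' : i = 0 := hinj i hi 0 (by omega) hi0
        have e2' : i + 1 = j := hinj (i+1) (by omega) j hj e2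
        omega
  · intro hnil
    have hl : (cW n hn).length = 4*n := length_cW hn
    rw [hnil] at hl
    simp at hl
    omega
  · rw [support_cW hn]
    have hsplit : (List.range (4*n+1)).map (fp n)
        = fp n 0 :: (List.range (4*n)).map (fun i => fp n (i+1)) := by
      rw [List.range_succ_eq_map]
      simp [Function.comp]
    rw [hsplit]
    simp only [List.tail_cons]
    refine List.Nodup.map_on ?_ List.nodup_range
    intro i hi j hj hij
    rw [List.mem_range] at hi hj
    rcases Nat.lt_or_ge (i+1) (4*n) with hi1 | hi1
    · rcases Nat.lt_or_ge (j+1) (4*n) with hj1 | hj1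
      · have := hinj _ hi1 _ hj1 hij; omega
      · have h4 : j + 1 = 4*n := by omega
        have h0 : fp n (i+1) = fp n 0 := by rw [hij, h4, fp_last hn]
        have := hinj _ hi1 0 (by omega) h0
        omega
    · have h4 : i + 1 = 4*n := by omega
      rcases Nat.lt_or_ge (j+1) (4*n) with hj1 | hj1
      · have h0 : fp n (j+1) = fp n 0 := by rw [← hij, h4, fp_last hn]
        have := hinj _ hj1 0 (by omega) h0
        omega
      · omega

/-- Arcs of the boundary cycle. -/
def arcW (n : ℕ) (hn : 1 ≤ n) (i j : ℕ) (hij : i ≤ j) (hj : j ≤ 4*n) :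
    bigG4.Walk (fp n i) (fp n j) :=
  (wof bigG4 (fun t => fp n (i + t)) (j - i)
    (fun t ht => hAdj hn (show i + t < 4*n by omega))).copy
    rfl (by rw [Nat.add_sub_cancel' hij])

lemma length_arcW {n : ℕ} (hn : 1 ≤ n) (i j : ℕ) (hij : i ≤ j) (hj : j ≤ 4*n) :
    (arcW n hn i j hij hj).length = j - i := by
  rw [arcW, Walk.length_copy, wof_length]

lemma walkIn_arcW {n : ℕ} (hn : 1 ≤ n) (i j : ℕ) (hij : i ≤ j) (hj : j ≤ 4*n) :
    WalkIn (cW n hn) (arcW n hn i j hij hj) := by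
  constructor
  · intro e he
    rw [arcW, Walk.edges_copy, wof_edges] at he
    rw [edges_cW hn]
    simp only [List.mem_map, List.mem_range] at he ⊢
    obtain ⟨t, ht, rfl⟩ := he
    exact ⟨i + t, by omega, rfl⟩
  · intro a ha
    rw [arcW, Walk.support_copy, wof_support] at ha
    rw [support_cW hn]
    simp only [List.mem_map, List.mem_range] at ha ⊢
    obtain ⟨t, ht, rfl⟩ := ha
    exact ⟨i + t, by omega, rfl⟩

end Grid

end Chordality


namespace Chordality

section Confine

open SimpleGraph Walk

lemma eq_triple {v : ℕ × ℕ × ℕ} {n : ℕ} {p : ℕ × ℕ} (h1 : v.1 = n) (h2 : v.2 = p) :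
    v = (n, p) := by
  obtain ⟨a, bc⟩ := v
  dsimp only at h1 h2
  rw [h1, h2]

/-- A walk avoiding the attaching vertex `(n,0,0)` cannot enter level `n`. -/
lemma levelB {n : ℕ} : ∀ {u v : ℕ × ℕ × ℕ} (w : bigG4.Walk u v),
    (n, 0, 0) ∉ w.support → u.1 ≠ n → v.1 ≠ n := by
  intro u v w
  induction w with
  | nil => intro _ h; exact h
  | @cons a b c h w ih =>
      intro hns ha
      have hb : b.1 ≠ n := by
        intro hbn
        rw [bigG4, fromRel_adj] at h
        obtain ⟨hne, hr | hr⟩ := h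
        · rcases hr with ⟨h1, h2, h3⟩ | ⟨h1, -⟩
          · apply hns
            rw [← eq_triple hbn h2, Walk.support_cons]
            exact List.mem_cons_of_mem _ w.start_mem_support
          · exact ha (h1 ▸ hbn)
        · rcases hr with ⟨h1, h2, h3⟩ | ⟨h1, -⟩
          · apply hns
            rw [← eq_triple hbn h1, Walk.support_cons]
            exact List.mem_cons_of_mem _ w.start_mem_support
          · exact ha (h1.symm ▸ hbn)
      refine ih (fun hmem => hns ?_) hb
      rw [Walk.support_cons]
      exact List.mem_cons_of_mem _ hmem

/-- A path between two vertices of level `n` that meets `(n,0,0)` at most at its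
endpoints stays in level `n`. -/
lemma levelA {n : ℕ} : ∀ {u v : ℕ × ℕ × ℕ} (w : bigG4.Walk u v),
    w.IsPath → u.1 = n → v.1 = n →
    ((n, 0, 0) ∈ w.support → (n,0,0) = u ∨ (n,0,0) = v) →
    ∀ x ∈ w.support, x.1 = n := by
  intro u v w
  induction w with
  | nil =>
      intro _ hu _ _ x hx
      rw [Walk.support_nil, List.mem_singleton] at hx
      rw [hx]; exact hu
  | @cons a b c h w ih =>
      intro hp ha hc h00 x hx
      rw [Walk.support_cons] at hx
      have hp' := (Walk.cons_isPath_iff h w).mp hp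
      have hpath' : w.IsPath := hp'.1
      have hanotin : a ∉ w.support := hp'.2
      rcases List.mem_cons.mp hx with rfl | hx'
      · exact ha
      have hb : b.1 = n := by
        rw [bigG4, fromRel_adj] at h
        obtain ⟨hne, hr | hr⟩ := h
        · rcases hr with ⟨h1, h2, h3⟩ | ⟨h1, -⟩
          · exfalso
            have hnot : (n,0,0) ∉ w.support := by
              rw [← eq_triple ha h1]; exact hanotin
            have hb1 : b.1 ≠ n := by omega
            exact (levelB w hnot hb1) hc
          · rw [← h1, ha]
        · rcases hr with ⟨h1, h2, h3⟩ | ⟨h1, -⟩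
          · exfalso
            have hnot : (n,0,0) ∉ w.support := by
              rw [← eq_triple ha h2]; exact hanotin
            have hb1 : b.1 ≠ n := by omega
            exact (levelB w hnot hb1) hc
          · rw [h1, ha]
      refine ih hpath' hb hc ?_ x hx'
      intro hmem
      rcases h00 (by rw [Walk.support_cons]; exact List.mem_cons_of_mem _ hmem) with h0 | h0
      · exfalso; rw [← h0] at hanotin; exact hanotin hmem
      · exact Or.inr h0

/-- Vertices of a level-`n` walk ending at a vertex with coordinates `≤ n` have
coordinates `≤ n`. -/
lemma coordBound {n : ℕ} : ∀ {u v : ℕ × ℕ × ℕ} (w : bigG4.Walk u v),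
    (∀ x ∈ w.support, x.1 = n) → v.2.1 ≤ n → v.2.2 ≤ n →
    ∀ x ∈ w.support, x.2.1 ≤ n ∧ x.2.2 ≤ n := by
  intro u v w
  induction w with
  | nil =>
      intro _ h1 h2 x hx
      rw [Walk.support_nil, List.mem_singleton] at hx
      rw [hx]; exact ⟨h1, h2⟩
  | @cons a b c h w ih =>
      intro hlev h1 h2 x hx
      rw [Walk.support_cons] at hx
      have hbmem : b ∈ (Walk.cons h w).support := by
        rw [Walk.support_cons]; exact List.mem_cons_of_mem _ w.start_mem_support
      have hstep := step_form (adj_step h (hlev a (by simp)) (hlev b hbmem))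
      rcases List.mem_cons.mp hx with rfl | hx'
      · exact ⟨hstep.1, hstep.2.1⟩
      · exact ih (fun y hy => hlev y
          (by rw [Walk.support_cons]; exact List.mem_cons_of_mem _ hy)) h1 h2 x hx'

end Confine

end Chordality


namespace Chordality

section Phi

open SimpleGraph Walk

/-- Number of vertical steps needed to reach the mod-4 class allowing a crossing
from column `x` to column `x+1`. -/
def gfun (x y : ℕ) : ℤ :=
  if y % 2 = 1 then 1 else if y % 4 = (if x % 2 = 0 then 0 else 2) then 0 else 2

lemma gfun_nonneg (x y : ℕ) : 0 ≤ gfun x y := by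
  unfold gfun; split_ifs <;> norm_num

lemma gfun_le_two (x y : ℕ) : gfun x y ≤ 2 := by
  unfold gfun; split_ifs <;> norm_num

lemma gfun_vert (x y : ℕ) : |gfun x (y+1) - gfun x y| ≤ 1 := by
  unfold gfun
  split_ifs <;> (try norm_num) <;> omega

lemma gfun_horiz {x y : ℕ} (h : (Odd (x+1) ∧ y % 4 = 0) ∨ (Even (x+1) ∧ y % 4 = 2)) :
    gfun x y = 0 ∧ gfun (x+1) y = 2 := by
  rcases h with ⟨ho, hy⟩ | ⟨he, hy⟩
  · have hx1 : (x+1) % 2 = 1 := Nat.odd_iff.mp ho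
    have hx : x % 2 = 0 := by omega
    have hy2 : y % 2 = 0 := by omega
    constructor <;> simp [gfun, hx, hx1, hy2, hy]
  · have hx1 : (x+1) % 2 = 0 := Nat.even_iff.mp he
    have hx : x % 2 = 1 := by omega
    have hy2 : y % 2 = 0 := by omega
    constructor <;> simp [gfun, hx, hx1, hy2, hy]

/-- The potential function measuring progress towards the right wall. -/
def phiF (v : ℕ × ℕ × ℕ) : ℤ := 3 * (v.2.1 : ℤ) - gfun v.2.1 v.2.2

/-- The taxicab distance to a fixed target is 1-Lipschitz along level-`n` edges. -/
lemma taxi_edge {n : ℕ} (xr yr : ℕ) {u v : ℕ × ℕ × ℕ} (hadj : bigG4.Adj u v)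
    (hu : u.1 = n) (hv : v.1 = n) :
    |(|(u.2.1:ℤ) - (xr:ℤ)| + |(u.2.2:ℤ) - (yr:ℤ)|) -
      (|(v.2.1:ℤ) - (xr:ℤ)| + |(v.2.2:ℤ) - (yr:ℤ)|)| ≤ 1 := by
  obtain ⟨-, -, -, -, hcase⟩ := step_form (adj_step hadj hu hv)
  have h1 : |(|(u.2.1:ℤ) - (xr:ℤ)|) - (|(v.2.1:ℤ) - (xr:ℤ)|)| ≤ |(u.2.1:ℤ) - (v.2.1:ℤ)| := by
    have := abs_abs_sub_abs_le_abs_sub ((u.2.1:ℤ) - (xr:ℤ)) ((v.2.1:ℤ) - (xr:ℤ))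
    rwa [sub_sub_sub_cancel_right] at this
  have h2 : |(|(u.2.2:ℤ) - (yr:ℤ)|) - (|(v.2.2:ℤ) - (yr:ℤ)|)| ≤ |(u.2.2:ℤ) - (v.2.2:ℤ)| := by
    have := abs_abs_sub_abs_le_abs_sub ((u.2.2:ℤ) - (yr:ℤ)) ((v.2.2:ℤ) - (yr:ℤ))
    rwa [sub_sub_sub_cancel_right] at this
  have hxy : |(u.2.1:ℤ) - (v.2.1:ℤ)| + |(u.2.2:ℤ) - (v.2.2:ℤ)| ≤ 1 := by
    rcases hcase with ⟨e1, e2 | e2⟩ | ⟨e1, ⟨e2, -⟩ | ⟨e2, -⟩⟩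
    · have d1 : (u.2.1:ℤ) - (v.2.1:ℤ) = 0 := by omega
      have d2 : (u.2.2:ℤ) - (v.2.2:ℤ) = -1 := by omega
      rw [d1, d2]; norm_num
    · have d1 : (u.2.1:ℤ) - (v.2.1:ℤ) = 0 := by omega
      have d2 : (u.2.2:ℤ) - (v.2.2:ℤ) = 1 := by omega
      rw [d1, d2]; norm_num
    · have d1 : (u.2.1:ℤ) - (v.2.1:ℤ) = -1 := by omega
      have d2 : (u.2.2:ℤ) - (v.2.2:ℤ) = 0 := by omega
      rw [d1, d2]; norm_num
    · have d1 : (u.2.1:ℤ) - (v.2.1:ℤ) = 1 := by omega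
      have d2 : (u.2.2:ℤ) - (v.2.2:ℤ) = 0 := by omega
      rw [d1, d2]; norm_num
  calc |(|(u.2.1:ℤ) - (xr:ℤ)| + |(u.2.2:ℤ) - (yr:ℤ)|) -
      (|(v.2.1:ℤ) - (xr:ℤ)| + |(v.2.2:ℤ) - (yr:ℤ)|)|
      = |((|(u.2.1:ℤ) - (xr:ℤ)|) - (|(v.2.1:ℤ) - (xr:ℤ)|)) +
        ((|(u.2.2:ℤ) - (yr:ℤ)|) - (|(v.2.2:ℤ) - (yr:ℤ)|))| := by ring_nf
    _ ≤ |(|(u.2.1:ℤ) - (xr:ℤ)|) - (|(v.2.1:ℤ) - (xr:ℤ)|)| +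
        |(|(u.2.2:ℤ) - (yr:ℤ)|) - (|(v.2.2:ℤ) - (yr:ℤ)|)| := abs_add_le _ _
    _ ≤ |(u.2.1:ℤ) - (v.2.1:ℤ)| + |(u.2.2:ℤ) - (v.2.2:ℤ)| := add_le_add h1 h2
    _ ≤ 1 := hxy

/-- The potential `phiF` is 1-Lipschitz along the edges visited by a strict shortcut
from `(n,0,a0)` to `(n,n,y0)`. -/
lemma phi_edge {n a0 y0 : ℕ} (hn : 2 ≤ n) (ha : a0 ≤ n) (hy1 : 1 ≤ y0) (hy2 : y0 + 1 ≤ n)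
    {u v : ℕ × ℕ × ℕ} (hadj : bigG4.Adj u v)
    (hu : u.1 = n ∧ ((1 ≤ u.2.1 ∧ u.2.1 + 1 ≤ n ∧ 1 ≤ u.2.2 ∧ u.2.2 + 1 ≤ n) ∨
      u = (n, 0, a0) ∨ u = (n, n, y0)))
    (hv : v.1 = n ∧ ((1 ≤ v.2.1 ∧ v.2.1 + 1 ≤ n ∧ 1 ≤ v.2.2 ∧ v.2.2 + 1 ≤ n) ∨
      v = (n, 0, a0) ∨ v = (n, n, y0))) :
    |phiF u - phiF v| ≤ 1 := by
  obtain ⟨hu1, hu2⟩ := hu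
  obtain ⟨hv1, hv2⟩ := hv
  obtain ⟨b1, b2, b3, b4, hcase⟩ := step_form (adj_step hadj hu1 hv1)
  rcases hcase with ⟨hxeq, hyd⟩ | ⟨hyeq, hxd⟩
  · -- vertical step
    have e : phiF u - phiF v = gfun v.2.1 v.2.2 - gfun u.2.1 u.2.2 := by
      unfold phiF; rw [hxeq]; ring
    rcases hyd with hyd | hyd
    · rw [e, ← hxeq, hyd]
      exact gfun_vert _ _
    · rw [e, abs_sub_comm, hxeq, hyd]
      exact gfun_vert _ _
  · -- horizontal step: first derive the mod-4 condition
    have hbound : u.2.2 ≠ 0 ∧ u.2.2 ≠ n := by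
      constructor
      · intro h0
        rcases hu2 with hint | hup | hur
        · omega
        · rcases hv2 with hint | hvp | hvr
          · omega
          · rw [hup, hvp] at hxd; dsimp only at hxd
            rcases hxd with ⟨e2, -⟩ | ⟨e2, -⟩ <;> omega
          · rw [hvr] at hyeq; dsimp only at hyeq; omega
        · rw [hur] at h0; dsimp only at h0; omega
      · intro h0
        rcases hu2 with hint | hup | hur
        · omega
        · rcases hv2 with hint | hvp | hvr
          · omega
          · rw [hup, hvp] at hxd; dsimp only at hxd
            rcases hxd with ⟨e2, -⟩ | ⟨e2, -⟩ <;> omega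
          · rw [hup, hvr] at hyeq; rw [hup] at h0; dsimp only at hyeq h0; omega
        · rw [hur] at h0; dsimp only at h0; omega
    rcases hxd with ⟨hset, hok⟩ | ⟨hset, hok⟩
    · -- v.2.1 = u.2.1 + 1, horizOK4 n v.2.1 u.2.2
      rcases hok with hq0 | hqn | ⟨-, -, hmod⟩
      · exact absurd hq0 hbound.1
      · exact absurd hqn hbound.2
      · rw [hset] at hmod
        have hg := gfun_horiz hmod
        have e : phiF u - phiF v
            = 3*(u.2.1:ℤ) - gfun u.2.1 u.2.2 - (3*((u.2.1:ℤ)+1) - gfun (u.2.1+1) u.2.2) := by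
          unfold phiF; rw [hset, ← hyeq]; push_cast; ring
        rw [e, hg.1, hg.2, abs_le]; constructor <;> linarith
    · -- u.2.1 = v.2.1 + 1, horizOK4 n u.2.1 v.2.2  (note a.2 = u.2.2 = v.2.2)
      rcases hok with hq0 | hqn | ⟨-, -, hmod⟩
      · exact absurd hq0 hbound.1
      · exact absurd hqn hbound.2
      · rw [hset, hyeq] at hmod
        have hg := gfun_horiz hmod
        have e : phiF u - phiF v
            = 3*((v.2.1:ℤ)+1) - gfun (v.2.1+1) v.2.2 - (3*(v.2.1:ℤ) - gfun v.2.1 v.2.2) := by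
          unfold phiF; rw [hset, hyeq]; push_cast; ring
        rw [e, hg.1, hg.2, abs_le]; constructor <;> linarith

end Phi

end Chordality


namespace Chordality

section Main

open SimpleGraph Walk

lemma cdist_le_of_arc {n : ℕ} (hn1 : 1 ≤ n) {u v : ℕ × ℕ × ℕ} (i j : ℕ) (hij : i ≤ j)
    (hj : j ≤ 4*n) (hu : fp n i = u) (hv : fp n j = v) :
    cdist (fun _ => (1:ℝ)) (cW n hn1) u v ≤ ((j - i : ℕ) : ℝ) := by
  have h := cdist_le_walkIn ((arcW n hn1 i j hij hj).copy hu hv)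
    (walkIn_copy (walkIn_arcW hn1 i j hij hj) hu hv)
  rwa [Walk.length_copy, length_arcW] at h

lemma cdist_le_of_arc' {n : ℕ} (hn1 : 1 ≤ n) {u v : ℕ × ℕ × ℕ} (i j : ℕ) (hij : i ≤ j)
    (hj : j ≤ 4*n) (hu : fp n i = v) (hv : fp n j = u) :
    cdist (fun _ => (1:ℝ)) (cW n hn1) u v ≤ ((j - i : ℕ) : ℝ) := by
  rw [cdist_comm]; exact cdist_le_of_arc hn1 i j hij hj hu hv

lemma cdist_le_of_wrap {n : ℕ} (hn1 : 1 ≤ n) {u v : ℕ × ℕ × ℕ} (i j : ℕ) (hi : i ≤ 4*n)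
    (hj : j ≤ 4*n) (hu : fp n i = u) (hv : fp n j = v) :
    cdist (fun _ => (1:ℝ)) (cW n hn1) u v ≤ ((4*n - i + j : ℕ) : ℝ) := by
  have h := cdist_le_walkIn
    (((arcW n hn1 i (4*n) hi (le_refl _)).copy hu (fp_last hn1)).append
      ((arcW n hn1 0 j (Nat.zero_le _) hj).copy rfl hv))
    (walkIn_append (walkIn_copy (walkIn_arcW hn1 _ _ _ _) _ _)
      (walkIn_copy (walkIn_arcW hn1 _ _ _ _) _ _))
  rwa [Walk.length_append, Walk.length_copy, Walk.length_copy, length_arcW, length_arcW,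
    Nat.sub_zero] at h

set_option maxHeartbeats 1000000 in
lemma noShortcutAux {n : ℕ} (hn : 11 ≤ n) (hn1 : 1 ≤ n) {a : ℕ} (ha : a ≤ n)
    {r : ℕ × ℕ × ℕ} (σ : bigG4.Walk (n, 0, a) r)
    (h : IsStrictShortcut (fun _ => (1:ℝ)) (cW n hn1) σ) : False := by
  obtain ⟨⟨hpath, hpc, hrc, hlt⟩, hstrict⟩ := h
  rw [wlen_one] at hlt
  obtain ⟨hr1, hrx, hry, hrb⟩ := (mem_cW_iff hn1).mp hrc
  -- every vertex of σ is at level n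
  have hlev : ∀ x ∈ σ.support, x.1 = n := by
    refine levelA σ hpath rfl hr1 ?_
    intro h00
    have h00c : ((n,0,0) : ℕ×ℕ×ℕ) ∈ (cW n hn1).support := by
      rw [mem_cW_iff hn1]; exact ⟨rfl, Nat.zero_le n, Nat.zero_le n, Or.inl rfl⟩
    exact hstrict _ h00 h00c
  have hbnd : ∀ x ∈ σ.support, x.2.1 ≤ n ∧ x.2.2 ≤ n := coordBound σ hlev hrx hry
  have hint : ∀ x ∈ σ.support, x ≠ (n,0,a) → x ≠ r →
      1 ≤ x.2.1 ∧ x.2.1 + 1 ≤ n ∧ 1 ≤ x.2.2 ∧ x.2.2 + 1 ≤ n := by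
    intro x hx hxp hxr
    have hnc : x ∉ (cW n hn1).support := by
      intro hxc
      rcases hstrict x hx hxc with h' | h'
      exacts [hxp h', hxr h']
    have hx1 := hlev x hx
    have hx2 := hbnd x hx
    rw [mem_cW_iff hn1] at hnc
    push_neg at hnc
    have hd := hnc hx1 hx2.1 hx2.2
    omega
  -- taxicab lower bound
  have hT : ((r.2.1:ℤ)) + ((a:ℤ) - (r.2.2:ℤ)) ≤ (σ.length:ℤ) ∧
      ((r.2.1:ℤ)) + ((r.2.2:ℤ) - (a:ℤ)) ≤ (σ.length:ℤ) := by
    have hl := walk_lip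
      (fun z : ℕ × ℕ × ℕ => |(z.2.1:ℤ) - ((r.2.1:ℕ):ℤ)| + |(z.2.2:ℤ) - ((r.2.2:ℕ):ℤ)|)
      (fun z : ℕ × ℕ × ℕ => z.1 = n)
      (fun u' v' hadj huu hvv => taxi_edge r.2.1 r.2.2 hadj huu hvv) σ hlev
    simp only [sub_self, abs_zero, add_zero, sub_zero, Nat.cast_zero, zero_sub, abs_neg,
      Int.abs_natCast] at hl
    have hl' : (r.2.1:ℤ) + |(a:ℤ) - (r.2.2:ℤ)| ≤ (σ.length:ℤ) := le_trans (le_abs_self _) hl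
    have h2 : (a:ℤ) - (r.2.2:ℤ) ≤ |(a:ℤ) - (r.2.2:ℤ)| := le_abs_self _
    have h3 : (r.2.2:ℤ) - (a:ℤ) ≤ |(a:ℤ) - (r.2.2:ℤ)| := by
      rw [abs_sub_comm]; exact le_abs_self _
    exact ⟨by linarith [hl'], by linarith [hl']⟩
  by_cases hy0 : r.2.2 = 0
  · -- r on the bottom side
    have hr' : r = (n, r.2.1, 0) := by
      refine eq_triple hr1 ?_
      rw [← hy0]
    have hcd := cdist_le_of_wrap hn1 (4*n - a) r.2.1 (by omega) (by omega)
      (fp_left ha) ((fp_bottom hrx).trans hr'.symm)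
    have hle : ((4*n - (4*n - a) + r.2.1 : ℕ) : ℝ) ≤ (σ.length : ℝ) := by
      have : (4*n - (4*n - a) + r.2.1 : ℕ) ≤ σ.length := by omega
      exact_mod_cast this
    linarith
  by_cases hyn : r.2.2 = n
  · -- r on the top side
    have hr' : r = (n, r.2.1, n) := by
      refine eq_triple hr1 ?_
      rw [← hyn]
    have hcd := cdist_le_of_arc' hn1 (3*n - r.2.1) (4*n - a) (by omega) (by omega)
      ((fp_top hrx).trans hr'.symm) (fp_left ha)
    have hle : ((4*n - a - (3*n - r.2.1) : ℕ) : ℝ) ≤ (σ.length : ℝ) := by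
      have : (4*n - a - (3*n - r.2.1) : ℕ) ≤ σ.length := by omega
      exact_mod_cast this
    linarith
  by_cases hx0 : r.2.1 = 0
  · -- r on the left side
    have hr' : r = (n, 0, r.2.2) := by
      refine eq_triple hr1 ?_
      rw [← hx0]
    rcases le_total a r.2.2 with hle' | hle'
    · have hcd := cdist_le_of_arc' hn1 (4*n - r.2.2) (4*n - a) (by omega) (by omega)
        ((fp_left hry).trans hr'.symm) (fp_left ha)
      have hle : ((4*n - a - (4*n - r.2.2) : ℕ) : ℝ) ≤ (σ.length : ℝ) := by
        have : (4*n - a - (4*n - r.2.2) : ℕ) ≤ σ.length := by omega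
        exact_mod_cast this
      linarith
    · have hcd := cdist_le_of_arc hn1 (4*n - a) (4*n - r.2.2) (by omega) (by omega)
        (fp_left ha) ((fp_left hry).trans hr'.symm)
      have hle : ((4*n - r.2.2 - (4*n - a) : ℕ) : ℝ) ≤ (σ.length : ℝ) := by
        have : (4*n - r.2.2 - (4*n - a) : ℕ) ≤ σ.length := by omega
        exact_mod_cast this
      linarith
  · -- r on the right side, 1 ≤ r.2.2 ≤ n-1
    have hxn : r.2.1 = n := by tauto
    have hy1 : 1 ≤ r.2.2 := by omega
    have hy2 : r.2.2 + 1 ≤ n := by omega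
    have hr' : r = (n, n, r.2.2) := by
      refine eq_triple hr1 ?_
      rw [← hxn]
    -- potential lower bound 3n-2 on the length of σ
    have hPall : ∀ x ∈ σ.support, x.1 = n ∧
        ((1 ≤ x.2.1 ∧ x.2.1 + 1 ≤ n ∧ 1 ≤ x.2.2 ∧ x.2.2 + 1 ≤ n) ∨
          x = ((n:ℕ), (0:ℕ), a) ∨ x = ((n:ℕ), (n:ℕ), r.2.2)) := by
      intro x hx
      refine ⟨hlev x hx, ?_⟩
      by_cases hxp : x = ((n:ℕ), (0:ℕ), a)
      · exact Or.inr (Or.inl hxp)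
      by_cases hxr : x = r
      · right; right; rw [hxr]; exact hr'
      · exact Or.inl (hint x hx hxp hxr)
    have hphi := walk_lip phiF
      (fun x => x.1 = n ∧
        ((1 ≤ x.2.1 ∧ x.2.1 + 1 ≤ n ∧ 1 ≤ x.2.2 ∧ x.2.2 + 1 ≤ n) ∨
          x = ((n:ℕ), (0:ℕ), a) ∨ x = ((n:ℕ), (n:ℕ), r.2.2)))
      (fun u' v' hadj hPu hPv =>
        phi_edge (by omega) ha hy1 (by omega) hadj hPu hPv) σ hPall
    have hp1 : phiF ((n:ℕ), (0:ℕ), a) = - gfun 0 a := by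
      unfold phiF; norm_num
    have hp2 : phiF r = 3*(n:ℤ) - gfun n r.2.2 := by
      rw [hr']; unfold phiF; norm_num
    have hlen3 : 3*(n:ℤ) - 2 ≤ (σ.length:ℤ) := by
      have h1 : phiF r - phiF ((n:ℕ), (0:ℕ), a) ≤ |phiF ((n:ℕ), (0:ℕ), a) - phiF r| := by
        rw [abs_sub_comm]; exact le_abs_self _
      have h2 := gfun_le_two n r.2.2
      have h3 := gfun_nonneg 0 a
      rw [hp1, hp2] at h1 hphi
      linarith [hphi]
    rcases Nat.lt_or_ge (a + r.2.2) 2 with hsmall | hbig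
    · have hcd := cdist_le_of_wrap hn1 (4*n - a) (n + r.2.2) (by omega) (by omega)
        (fp_left ha) ((fp_right hry).trans hr'.symm)
      have hle : ((4*n - (4*n - a) + (n + r.2.2) : ℕ) : ℝ) ≤ (σ.length : ℝ) := by
        have : (4*n - (4*n - a) + (n + r.2.2) : ℕ) ≤ σ.length := by omega
        exact_mod_cast this
      linarith
    · have hcd := cdist_le_of_arc' hn1 (n + r.2.2) (4*n - a) (by omega) (by omega)
        ((fp_right hry).trans hr'.symm) (fp_left ha)
      have hle : ((4*n - a - (n + r.2.2) : ℕ) : ℝ) ≤ (σ.length : ℝ) := by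
        have : (4*n - a - (n + r.2.2) : ℕ) ≤ σ.length := by omega
        exact_mod_cast this
      linarith

lemma noShortcut {n : ℕ} (hn : 11 ≤ n) (hn1 : 1 ≤ n) {q : ℕ} (hq : q ≤ n) :
    ¬ ShortcutVertex (fun _ => (1:ℝ)) (cW n hn1) (n, 0, q) := by
  rintro ⟨p, r, σ, hss, hv | hv⟩
  · subst hv
    exact noShortcutAux hn hn1 hq σ hss
  · subst hv
    exact noShortcutAux hn hn1 hq σ.reverse hss.rev

end Main

end Chordality

namespace Chordality

/-- The graph `G`, obtained by attaching the grids `G_n` (with the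
`mod 4` pattern of horizontal edges) to the graph `ℕ`, all edges of length `1`, is not
`ε`-densely `k`-path-chordal for any `ε > 0` and `k > 10`: for `n ≥ max {k, 2ε}`, on
the geodesic-square cycle in `G_n` with corner vertices `(0,0), (n,0), (n,n), (0,n)`,
no vertex of the form `(0, q)`, `0 ≤ q ≤ n`, is a shortcut vertex. -/
theorem bigG4_not_denselyKPathChordal (ε k : ℝ) (hε : 0 < ε) (hk : 10 < k) :
    ¬ DenselyKPathChordal bigG4 (fun _ => (1 : ℝ)) ε k ∧
    ∀ n : ℕ, k ≤ (n : ℝ) → 2 * ε ≤ (n : ℝ) →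
      ∃ c : bigG4.Walk (n, 0, 0) (n, 0, 0), c.IsCycle ∧
        (∀ v ∈ c.support, v.1 = n ∧ v.2.1 ≤ n ∧ v.2.2 ≤ n ∧
          (v.2.1 = 0 ∨ v.2.1 = n ∨ v.2.2 = 0 ∨ v.2.2 = n)) ∧
        (n, n, 0) ∈ c.support ∧ (n, n, n) ∈ c.support ∧ (n, 0, n) ∈ c.support ∧
        ∀ q : ℕ, q ≤ n → ¬ ShortcutVertex (fun _ => (1 : ℝ)) c (n, 0, q) := by
  have part2 : ∀ n : ℕ, k ≤ (n : ℝ) → 2 * ε ≤ (n : ℝ) →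
      ∃ c : bigG4.Walk (n, 0, 0) (n, 0, 0), c.IsCycle ∧
        (∀ v ∈ c.support, v.1 = n ∧ v.2.1 ≤ n ∧ v.2.2 ≤ n ∧
          (v.2.1 = 0 ∨ v.2.1 = n ∨ v.2.2 = 0 ∨ v.2.2 = n)) ∧
        (n, n, 0) ∈ c.support ∧ (n, n, n) ∈ c.support ∧ (n, 0, n) ∈ c.support ∧
        ∀ q : ℕ, q ≤ n → ¬ ShortcutVertex (fun _ => (1 : ℝ)) c (n, 0, q) := by
    intro n hkn hεn
    have hn11 : 11 ≤ n := by
      have h10 : (10:ℝ) < (n:ℝ) := lt_of_lt_of_le hk hkn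
      have h10' : 10 < n := by exact_mod_cast h10
      omega
    have hn1 : 1 ≤ n := by omega
    refine ⟨cW n hn1, isCycle_cW hn1, fun v hv => (mem_cW_iff hn1).mp hv, ?_, ?_, ?_,
      fun q hq => noShortcut hn11 hn1 hq⟩
    · rw [mem_cW_iff hn1]; exact ⟨rfl, le_rfl, Nat.zero_le n, Or.inr (Or.inl rfl)⟩
    · rw [mem_cW_iff hn1]; exact ⟨rfl, le_rfl, le_rfl, Or.inr (Or.inl rfl)⟩
    · rw [mem_cW_iff hn1]; exact ⟨rfl, Nat.zero_le n, le_rfl, Or.inl rfl⟩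
  refine ⟨?_, part2⟩
  intro hD
  set N := max (⌈k⌉₊) (⌈2*ε⌉₊) with hN
  have hkN : k ≤ (N:ℝ) := le_trans (Nat.le_ceil k) (by exact_mod_cast le_max_left _ _)
  have hεN : 2*ε ≤ (N:ℝ) := le_trans (Nat.le_ceil _) (by exact_mod_cast le_max_right _ _)
  have hN11 : 11 ≤ N := by
    have h1 : (10:ℝ) < (N:ℝ) := lt_of_lt_of_le hk hkN
    have h2 : 10 < N := by exact_mod_cast h1
    omega
  set n := 2*N with hn_def
  have hn11 : 11 ≤ n := by omega
  have hn1 : 1 ≤ n := by omega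
  have hwl : k ≤ wlen (fun _ => (1:ℝ)) (cW n hn1) := by
    rw [wlen_one, length_cW]
    have h1 : (N:ℝ) ≤ ((4*n : ℕ):ℝ) := by exact_mod_cast (by omega : N ≤ 4*n)
    linarith
  have hx0mem : ((n, 0, N) : ℕ×ℕ×ℕ) ∈ (cW n hn1).support := by
    rw [mem_cW_iff hn1]; exact ⟨rfl, Nat.zero_le n, (show N ≤ n by omega), Or.inl rfl⟩
  obtain ⟨v, hsv, hcd⟩ := hD _ (cW n hn1) (isCycle_cW hn1) hwl (n, 0, N) hx0mem
  have hvc : v ∈ (cW n hn1).support := by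
    obtain ⟨p, q, σ, hss, hv | hv⟩ := hsv
    · rw [hv]; exact hss.1.2.1
    · rw [hv]; exact hss.1.2.2.1
  obtain ⟨hv1, hvx, hvy, hvb⟩ := (mem_cW_iff hn1).mp hvc
  have hBle : ((v.2.1:ℝ)) + |(v.2.2:ℝ) - (N:ℝ)|
      ≤ cdist (fun _ => (1:ℝ)) (cW n hn1) v (n, 0, N) := by
    obtain ⟨iv, hivlt, hivf⟩ : ∃ i, i < 4*n + 1 ∧ fp n i = v := by
      have h := hvc
      rw [support_cW hn1] at h
      simp only [List.mem_map, List.mem_range] at h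
      exact h
    have hfx : fp n (4*n - N) = ((n, 0, N) : ℕ×ℕ×ℕ) := fp_left (by omega)
    have hW0 : ∃ w : bigG4.Walk v (n, 0, N), WalkIn (cW n hn1) w := by
      rcases le_total iv (4*n - N) with hle | hle
      · exact ⟨(arcW n hn1 iv (4*n - N) hle (by omega)).copy hivf hfx,
          walkIn_copy (walkIn_arcW hn1 _ _ _ _) _ _⟩
      · exact ⟨((arcW n hn1 (4*n - N) iv hle (by omega)).copy hfx hivf).reverse,
          walkIn_reverse (walkIn_copy (walkIn_arcW hn1 _ _ _ _) _ _)⟩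
    obtain ⟨w0, hw0⟩ := hW0
    refine le_cdist_walkIn _ w0 hw0 ?_
    intro w hw
    have hP : ∀ z ∈ w.support, z.1 = n := fun z hz => ((mem_cW_iff hn1).mp (hw.2 z hz)).1
    have hl := walk_lip
      (fun z : ℕ × ℕ × ℕ => |(z.2.1:ℤ) - ((0:ℕ):ℤ)| + |(z.2.2:ℤ) - ((N:ℕ):ℤ)|)
      (fun z : ℕ × ℕ × ℕ => z.1 = n)
      (fun u' v' hadj huu hvv => taxi_edge 0 N hadj huu hvv) w hP
    simp only [sub_self, abs_zero, add_zero, zero_add, sub_zero, Nat.cast_zero,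
      Int.abs_natCast] at hl
    have hl2 : (v.2.1:ℤ) + |(v.2.2:ℤ) - (N:ℤ)| ≤ (w.length:ℤ) := le_trans (le_abs_self _) hl
    exact_mod_cast hl2
  rcases hvb with hb | hb | hb | hb
  · have hveq : v = (n, 0, v.2.2) := by
      refine eq_triple hv1 ?_
      rw [← hb]
    exact noShortcut hn11 hn1 hvy (by rw [← hveq]; exact hsv)
  · have habs : (0:ℝ) ≤ |(v.2.2:ℝ) - (N:ℝ)| := abs_nonneg _
    have hv21 : (v.2.1:ℝ) = (n:ℝ) := by exact_mod_cast hb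
    have hNn : (N:ℝ) ≤ (n:ℝ) := by exact_mod_cast (by omega : N ≤ n)
    linarith [hBle, hcd, hε, hεN]
  · have h1 : (N:ℝ) - (v.2.2:ℝ) ≤ |(v.2.2:ℝ) - (N:ℝ)| := by
      rw [abs_sub_comm]; exact le_abs_self _
    have h2 : (v.2.2:ℝ) = 0 := by exact_mod_cast hb
    have h3 : (0:ℝ) ≤ (v.2.1:ℝ) := by positivity
    linarith [hBle, hcd, hε, hεN]
  · have h1 : (v.2.2:ℝ) - (N:ℝ) ≤ |(v.2.2:ℝ) - (N:ℝ)| := le_abs_self _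
    have h2 : (v.2.2:ℝ) = (n:ℝ) := by exact_mod_cast hb
    have h2' : (n:ℝ) = 2*(N:ℝ) := by exact_mod_cast (by omega : n = 2*N)
    have h3 : (0:ℝ) ≤ (v.2.1:ℝ) := by positivity
    linarith [hBle, hcd, hε, hεN]

end Chordality
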